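/- arXiv:2403.05677 — 3 statements merged into one kernel-verified Lean document; each statement's English description precedes it below -/
import Mathlib

section
/- Fix integers r ≥ 2, n ≥ 1, N ≥ rn+1 and an r-coloring of the edges of the complete bipartite graph K_{N,N} with parts X and Y that contains no monochromatic copy of S_{n,n}. Then for every color i ∈ {1,...,r}: x_i · (N - (r-1)n) ≤ n·N and y_i · (N - (r-1)n) ≤ n·N, where x_i (resp. y_i) is the number of vertices of X (resp. Y) whose unique received color is i. -/
/-- A monochromatic copy of the double star `S_{k,l}` in an `r`-coloring `c` of the
edges of the complete bipartite graph `K_{N,N}` with parts `X = Fin N` (first argument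
of `c`) and `Y = Fin N` (second argument). -/
def BipHasMonoDoubleStar (N r k l : ℕ) (c : Fin N → Fin N → Fin r) : Prop :=
  ∃ (u v : Fin N) (a : Fin k → Fin N) (b : Fin l → Fin N) (col : Fin r),
    Function.Injective a ∧ Function.Injective b ∧
    (∀ i, a i ≠ v) ∧ (∀ j, b j ≠ u) ∧
    c u v = col ∧ (∀ i, c u (a i) = col) ∧ (∀ j, c (b j) v = col)

/-- The number of edges of color `i` incident to the vertex `x ∈ X`. -/
def dX (N r : ℕ) (c : Fin N → Fin N → Fin r) (i : Fin r) (x : Fin N) : ℕ :=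
  (Finset.univ.filter (fun y => c x y = i)).card

/-- The number of edges of color `i` incident to the vertex `y ∈ Y`. -/
def dY (N r : ℕ) (c : Fin N → Fin N → Fin r) (i : Fin r) (y : Fin N) : ℕ :=
  (Finset.univ.filter (fun x => c x y = i)).card

/-- `x_i`: the number of vertices of `X` whose unique received color is `i`
(a vertex receives color `j` if it is incident to at least `n+1` edges of color `j`). -/
def xcount (n N r : ℕ) (c : Fin N → Fin N → Fin r) (i : Fin r) : ℕ :=
  (Finset.univ.filter (fun x : Fin N =>
    n + 1 ≤ dX N r c i x ∧ ∀ j : Fin r, n + 1 ≤ dX N r c j x → j = i)).card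

/-- `y_i`: the number of vertices of `Y` whose unique received color is `i`. -/
def ycount (n N r : ℕ) (c : Fin N → Fin N → Fin r) (i : Fin r) : ℕ :=
  (Finset.univ.filter (fun y : Fin N =>
    n + 1 ≤ dY N r c i y ∧ ∀ j : Fin r, n + 1 ≤ dY N r c j y → j = i)).card

/-- `z_i`: the number of vertices of `X ∪ Y` receiving exactly `i` colors. -/
def zcount (n N r : ℕ) (c : Fin N → Fin N → Fin r) (i : ℕ) : ℕ :=
  (Finset.univ.filter (fun x : Fin N =>
    (Finset.univ.filter (fun j : Fin r => n + 1 ≤ dX N r c j x)).card = i)).card +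
  (Finset.univ.filter (fun y : Fin N =>
    (Finset.univ.filter (fun j : Fin r => n + 1 ≤ dY N r c j y)).card = i)).card

/-- `e*`: the number of important edges, i.e. edges whose color is received by at
least one of its endpoints. -/
def estar (n N r : ℕ) (c : Fin N → Fin N → Fin r) : ℕ :=
  (Finset.univ.filter (fun p : Fin N × Fin N =>
    n + 1 ≤ dX N r c (c p.1 p.2) p.1 ∨ n + 1 ≤ dY N r c (c p.1 p.2) p.2)).card

lemma emb_of_card {N n : ℕ} (T : Finset (Fin N)) (h : n ≤ T.card) :
    ∃ a : Fin n → Fin N, Function.Injective a ∧ ∀ i, a i ∈ T := by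
  obtain ⟨A, hAT, hAc⟩ := Finset.exists_subset_card_eq h
  refine ⟨fun i => (A.orderIsoOfFin hAc i : Fin N), ?_, fun i => hAT (A.orderIsoOfFin hAc i).2⟩
  intro i j hij
  exact (A.orderIsoOfFin hAc).injective (Subtype.ext hij)

lemma star_of {N r n : ℕ} (c : Fin N → Fin N → Fin r) (u v : Fin N)
    (h1 : n + 1 ≤ dX N r c (c u v) u) (h2 : n + 1 ≤ dY N r c (c u v) v) :
    BipHasMonoDoubleStar N r n n c := by
  set col := c u v with hcol
  have hTA : n ≤ ((Finset.univ.filter (fun y => c u y = col)).erase v).card := by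
    rw [Finset.card_erase_of_mem (by simp [← hcol])]
    have : n + 1 ≤ (Finset.univ.filter (fun y => c u y = col)).card := h1
    omega
  have hTB : n ≤ ((Finset.univ.filter (fun x => c x v = col)).erase u).card := by
    rw [Finset.card_erase_of_mem (by simp [← hcol])]
    have : n + 1 ≤ (Finset.univ.filter (fun x => c x v = col)).card := h2
    omega
  obtain ⟨a, ha, haT⟩ := emb_of_card _ hTA
  obtain ⟨b, hb, hbT⟩ := emb_of_card _ hTB
  refine ⟨u, v, a, b, col, ha, hb, ?_, ?_, hcol.symm, ?_, ?_⟩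
  · intro i; exact Finset.ne_of_mem_erase (haT i)
  · intro j; exact Finset.ne_of_mem_erase (hbT j)
  · intro i; have := Finset.mem_of_mem_erase (haT i); simpa using this
  · intro j; have := Finset.mem_of_mem_erase (hbT j); simpa using this

lemma swap_star {N r n : ℕ} (c : Fin N → Fin N → Fin r)
    (h : BipHasMonoDoubleStar N r n n (fun y x => c x y)) :
    BipHasMonoDoubleStar N r n n c := by
  obtain ⟨u, v, a, b, col, ha, hb, hav, hbu, huv, hua, hbv⟩ := h
  exact ⟨v, u, b, a, col, hb, ha, hbu, hav, huv, hbv, hua⟩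

lemma xside (r n N : ℕ) (hr : 2 ≤ r) (hn : 1 ≤ n) (hN : r * n + 1 ≤ N)
    (c : Fin N → Fin N → Fin r) (hno : ¬ BipHasMonoDoubleStar N r n n c) (i : Fin r) :
    xcount n N r c i * (N - (r-1)*n) ≤ n * N := by
  classical
  set S := Finset.univ.filter (fun x : Fin N =>
    n + 1 ≤ dX N r c i x ∧ ∀ j : Fin r, n + 1 ≤ dX N r c j x → j = i) with hS
  -- each x in S has large degree in color i
  have hdeg : ∀ x ∈ S, N - (r-1)*n ≤ dX N r c i x := by
    intro x hx
    rw [hS, Finset.mem_filter] at hx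
    obtain ⟨-, hx1, hx2⟩ := hx
    have hsum : (Finset.univ : Finset (Fin N)).card
        = ∑ j : Fin r, (Finset.univ.filter (fun y => c x y = j)).card :=
      Finset.card_eq_sum_card_fiberwise (fun y _ => Finset.mem_univ (c x y))
    have hsum' : N = ∑ j : Fin r, dX N r c j x := by
      simpa [dX] using hsum
    have hmem : i ∈ (Finset.univ : Finset (Fin r)) := Finset.mem_univ i
    rw [← Finset.sum_erase_add _ _ hmem] at hsum'
    have hbound : ∑ j ∈ Finset.univ.erase i, dX N r c j x ≤ (r-1)*n := by
      calc ∑ j ∈ Finset.univ.erase i, dX N r c j x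
          ≤ ∑ _j ∈ Finset.univ.erase i, n := by
            refine Finset.sum_le_sum ?_
            intro j hj
            rw [Finset.mem_erase] at hj
            by_contra hc
            exact hj.1 (hx2 j (by omega))
        _ = (r-1)*n := by
            rw [Finset.sum_const, smul_eq_mul, Finset.card_erase_of_mem (Finset.mem_univ i)]
            simp
    omega
  -- no y adjacent to S in color i has large color-i degree
  have hy : ∀ y : Fin N, (∃ x ∈ S, c x y = i) → dY N r c i y ≤ n := by
    intro y ⟨x, hxS, hxy⟩
    by_contra hc
    apply hno
    refine star_of c x y ?_ ?_
    · rw [hxy]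
      rw [hS, Finset.mem_filter] at hxS
      exact hxS.2.1
    · rw [hxy]; omega
  -- double counting
  have key : ∑ x ∈ S, dX N r c i x = ∑ y : Fin N, (S.filter (fun x => c x y = i)).card := by
    simp only [dX, Finset.card_filter]
    rw [Finset.sum_comm]
  have hterm : ∀ y : Fin N, (S.filter (fun x => c x y = i)).card ≤ n := by
    intro y
    rcases Finset.eq_empty_or_nonempty (S.filter (fun x => c x y = i)) with h | h
    · simp [h]
    · obtain ⟨x, hx⟩ := h
      rw [Finset.mem_filter] at hx
      have h1 : dY N r c i y ≤ n := hy y ⟨x, hx.1, hx.2⟩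
      refine le_trans ?_ h1
      apply Finset.card_le_card
      intro z hz
      rw [Finset.mem_filter] at hz
      simp [dY, hz.2]
  calc xcount n N r c i * (N - (r-1)*n)
      = S.card • (N - (r-1)*n) := by rw [smul_eq_mul]; rfl
    _ ≤ ∑ x ∈ S, dX N r c i x := Finset.card_nsmul_le_sum S _ _ hdeg
    _ = ∑ y : Fin N, (S.filter (fun x => c x y = i)).card := key
    _ ≤ ∑ _y : Fin N, n := Finset.sum_le_sum (fun y _ => hterm y)
    _ = N * n := by simp [mul_comm]
    _ = n * N := mul_comm _ _

/-- Claim `XC_YC`: for every color `i`, `x_i (N - (r-1)n) ≤ nN` and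
`y_i (N - (r-1)n) ≤ nN`. -/
theorem stmt11 (r n N : ℕ) (hr : 2 ≤ r) (hn : 1 ≤ n) (hN : r * n + 1 ≤ N)
    (c : Fin N → Fin N → Fin r) (hno : ¬ BipHasMonoDoubleStar N r n n c) :
    ∀ i : Fin r,
      xcount n N r c i * (N - (r-1)*n) ≤ n * N ∧
      ycount n N r c i * (N - (r-1)*n) ≤ n * N := by
  intro i
  constructor
  · exact xside r n N hr hn hN c hno i
  · have hno' : ¬ BipHasMonoDoubleStar N r n n (fun y x => c x y) :=
      fun h => hno (swap_star c h)
    have := xside r n N hr hn hN (fun y x => c x y) hno' i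
    exact this
end

section
/- Fix integers r ≥ 2, n ≥ 1, N ≥ rn+1 and an r-coloring of the edges of the complete bipartite graph K_{N,N} with parts X and Y that contains no monochromatic copy of S_{n,n}. For i ∈ {1,...,r} let x_i (resp. y_i) be the number of vertices of X (resp. Y) whose unique received color is i, and let e* be the number of important edges. Then ∑_{i=1}^{r} x_i · y_i ≤ N² - e*. -/
lemma exists_inj_of_card {N n : ℕ} (s : Finset (Fin N)) (h : n ≤ s.card) :
    ∃ a : Fin n → Fin N, Function.Injective a ∧ ∀ i, a i ∈ s := by
  obtain ⟨t, hts, ht⟩ := Finset.exists_subset_card_eq h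
  refine ⟨fun i => (t.orderIsoOfFin ht i : Fin N), ?_, fun i => hts (t.orderIsoOfFin ht i).2⟩
  intro i j hij
  exact (t.orderIsoOfFin ht).injective (Subtype.ext hij)

lemma mono_of (n N r : ℕ) (c : Fin N → Fin N → Fin r) (u v : Fin N) (i : Fin r)
    (hc : c u v = i) (hu : n + 1 ≤ dX N r c i u) (hv : n + 1 ≤ dY N r c i v) :
    BipHasMonoDoubleStar N r n n c := by
  have hvmem : v ∈ Finset.univ.filter (fun y => c u y = i) := by simp [hc]
  have humem : u ∈ Finset.univ.filter (fun x => c x v = i) := by simp [hc]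
  have hA : n ≤ ((Finset.univ.filter (fun y => c u y = i)).erase v).card := by
    rw [Finset.card_erase_of_mem hvmem]
    unfold dX at hu; omega
  have hB : n ≤ ((Finset.univ.filter (fun x => c x v = i)).erase u).card := by
    rw [Finset.card_erase_of_mem humem]
    unfold dY at hv; omega
  obtain ⟨a, ha, hamem⟩ := exists_inj_of_card _ hA
  obtain ⟨b, hb, hbmem⟩ := exists_inj_of_card _ hB
  refine ⟨u, v, a, b, i, ha, hb, ?_, ?_, hc, ?_, ?_⟩ <;> intro j
  · exact (Finset.mem_erase.mp (hamem j)).1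
  · exact (Finset.mem_erase.mp (hbmem j)).1
  · have := (Finset.mem_erase.mp (hamem j)).2; simpa using this
  · have := (Finset.mem_erase.mp (hbmem j)).2; simpa using this

/-- The non-important edges include all bicolored pairs: `∑_i x_i y_i ≤ N² - e*`. -/
theorem stmt15 (r n N : ℕ) (hr : 2 ≤ r) (hn : 1 ≤ n) (hN : r * n + 1 ≤ N)
    (c : Fin N → Fin N → Fin r) (hno : ¬ BipHasMonoDoubleStar N r n n c) :
    ∑ i : Fin r, (xcount n N r c i : ℤ) * (ycount n N r c i : ℤ) ≤
      (N : ℤ)^2 - estar n N r c := by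

  classical
  set A : Fin r → Finset (Fin N) := fun i => Finset.univ.filter (fun x : Fin N =>
    n + 1 ≤ dX N r c i x ∧ ∀ j : Fin r, n + 1 ≤ dX N r c j x → j = i) with hA
  set B : Fin r → Finset (Fin N) := fun i => Finset.univ.filter (fun y : Fin N =>
    n + 1 ≤ dY N r c i y ∧ ∀ j : Fin r, n + 1 ≤ dY N r c j y → j = i) with hB
  set T : Fin r → Finset (Fin N × Fin N) := fun i => A i ×ˢ B i with hT
  have hdisj : ∀ i ∈ (Finset.univ : Finset (Fin r)), ∀ j ∈ Finset.univ, i ≠ j →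
      Disjoint (T i) (T j) := by
    intro i _ j _ hij
    rw [Finset.disjoint_left]
    intro p hpi hpj
    have h1 := (Finset.mem_filter.mp (Finset.mem_product.mp hpi).1).2
    have h2 := (Finset.mem_filter.mp (Finset.mem_product.mp hpj).1).2
    exact hij (h2.2 i h1.1)
  have hsub : Finset.univ.biUnion T ⊆ Finset.univ.filter (fun p : Fin N × Fin N =>
      ¬ (n + 1 ≤ dX N r c (c p.1 p.2) p.1 ∨ n + 1 ≤ dY N r c (c p.1 p.2) p.2)) := by
    intro p hp
    obtain ⟨i, _, hpi⟩ := Finset.mem_biUnion.mp hp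
    have h1 := (Finset.mem_filter.mp (Finset.mem_product.mp hpi).1).2
    have h2 := (Finset.mem_filter.mp (Finset.mem_product.mp hpi).2).2
    refine Finset.mem_filter.mpr ⟨Finset.mem_univ _, ?_⟩
    rintro (h | h)
    · have hc : c p.1 p.2 = i := h1.2 _ h
      exact hno (mono_of n N r c p.1 p.2 i hc (hc ▸ h) h2.1)
    · have hc : c p.1 p.2 = i := h2.2 _ h
      exact hno (mono_of n N r c p.1 p.2 i hc h1.1 (hc ▸ h))
  have hcard : ∑ i : Fin r, (T i).card ≤ N * N - estar n N r c := by
    rw [← Finset.card_biUnion hdisj]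
    have h1 : (Finset.univ.biUnion T).card ≤ (Finset.univ.filter (fun p : Fin N × Fin N =>
        ¬ (n + 1 ≤ dX N r c (c p.1 p.2) p.1 ∨ n + 1 ≤ dY N r c (c p.1 p.2) p.2))).card :=
      Finset.card_le_card hsub
    have h2 := Finset.card_filter_add_card_filter_not (s := (Finset.univ : Finset (Fin N × Fin N)))
      (p := fun p : Fin N × Fin N =>
        n + 1 ≤ dX N r c (c p.1 p.2) p.1 ∨ n + 1 ≤ dY N r c (c p.1 p.2) p.2)
    have h3 : (Finset.univ : Finset (Fin N × Fin N)).card = N * N := by simp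
    unfold estar
    omega
  have hTcard : ∀ i : Fin r, (T i).card = xcount n N r c i * ycount n N r c i := by
    intro i
    rw [hT]
    simp only [Finset.card_product]
    rfl
  have hle : estar n N r c ≤ N * N := by
    calc estar n N r c ≤ (Finset.univ : Finset (Fin N × Fin N)).card := Finset.card_le_card (Finset.filter_subset _ _)
    _ = N * N := by simp
  have : ∑ i : Fin r, xcount n N r c i * ycount n N r c i ≤ N * N - estar n N r c := by
    calc ∑ i : Fin r, xcount n N r c i * ycount n N r c i = ∑ i : Fin r, (T i).card := by
          simp_rw [hTcard]
      _ ≤ N * N - estar n N r c := hcard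
  have := (Int.ofNat_le.mpr this)
  push_cast [Nat.cast_sub hle] at this
  calc ∑ i : Fin r, (xcount n N r c i : ℤ) * (ycount n N r c i : ℤ)
      ≤ (N : ℤ) * N - estar n N r c := by exact_mod_cast this
    _ = (N : ℤ)^2 - estar n N r c := by ring
end

section
/- Fix integers r ≥ 2, n ≥ 1, N ≥ rn+1 and an r-coloring of the edges of the complete bipartite graph K_{N,N} with parts X and Y that contains no monochromatic copy of S_{n,n}. For i ∈ {1,...,r} let x_i (resp. y_i) be the number of vertices of X (resp. Y) whose unique received color is i, let e* be the number of important edges, and let σ = sqrt(N² - e*)/N (so σ² N² is the number of non-important edges). Let C > 0 be a real number and let t be the number of indices i ∈ {1,...,r} with max(x_i, y_i) ≥ σN/C. Then ∑_{i=1}^{r} (x_i + y_i) ≤ (t·n·N)/(N - (r-1)n) + (r - t)·σN/C + C·σ·N. -/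
/-- `σ`, where `σ²N²` is the number of non-important edges: `σ = √(N² - e*)/N`. -/
noncomputable def sigmaBip (n N r : ℕ) (c : Fin N → Fin N → Fin r) : ℝ :=
  Real.sqrt ((N : ℝ)^2 - (estar n N r c : ℝ)) / N

open Classical in
/-- `t`: the number of colors `i` with `max{x_i, y_i} ≥ σN/C`. -/
noncomputable def tcount (n N r : ℕ) (c : Fin N → Fin N → Fin r) (C : ℝ) : ℕ :=
  (Finset.univ.filter (fun i : Fin r =>
    sigmaBip n N r c * N / C ≤ (max (xcount n N r c i) (ycount n N r c i) : ℕ))).card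

section Stmt16Aux

lemma monoStar_of {n N r : ℕ} (c : Fin N → Fin N → Fin r) {u v : Fin N} {i : Fin r}
    (hc : c u v = i) (hu : n + 1 ≤ dX N r c i u) (hv : n + 1 ≤ dY N r c i v) :
    BipHasMonoDoubleStar N r n n c := by
  classical
  have ha : n ≤ ((Finset.univ.filter (fun y => c u y = i)).erase v).card := by
    have h1 := Finset.pred_card_le_card_erase (a := v)
      (s := Finset.univ.filter (fun y => c u y = i))
    have h2 : n + 1 ≤ (Finset.univ.filter (fun y => c u y = i)).card := hu
    omega
  have hb : n ≤ ((Finset.univ.filter (fun x => c x v = i)).erase u).card := by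
    have h1 := Finset.pred_card_le_card_erase (a := u)
      (s := Finset.univ.filter (fun x => c x v = i))
    have h2 : n + 1 ≤ (Finset.univ.filter (fun x => c x v = i)).card := hv
    omega
  obtain ⟨ta, hta, htac⟩ := Finset.exists_subset_card_eq ha
  obtain ⟨tb, htb, htbc⟩ := Finset.exists_subset_card_eq hb
  refine ⟨u, v, fun k => ta.orderEmbOfFin htac k, fun k => tb.orderEmbOfFin htbc k, i,
    fun a b h => (ta.orderEmbOfFin htac).injective h,
    fun a b h => (tb.orderEmbOfFin htbc).injective h, ?_, ?_, hc, ?_, ?_⟩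
  · intro k
    exact Finset.ne_of_mem_erase (hta (ta.orderEmbOfFin_mem htac k))
  · intro k
    exact Finset.ne_of_mem_erase (htb (tb.orderEmbOfFin_mem htbc k))
  · intro k
    have h := Finset.mem_of_mem_erase (hta (ta.orderEmbOfFin_mem htac k))
    simpa using (Finset.mem_filter.mp h).2
  · intro k
    have h := Finset.mem_of_mem_erase (htb (tb.orderEmbOfFin_mem htbc k))
    simpa using (Finset.mem_filter.mp h).2

lemma sum_dX {N r : ℕ} (c : Fin N → Fin N → Fin r) (u : Fin N) :
    ∑ j : Fin r, dX N r c j u = N := by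
  classical
  have h := Finset.card_eq_sum_card_fiberwise
    (f := c u) (s := (Finset.univ : Finset (Fin N))) (t := (Finset.univ : Finset (Fin r)))
    (fun x _ => Finset.mem_univ _)
  simpa [dX, Finset.card_univ] using h.symm

lemma dX_ge {n N r : ℕ} (c : Fin N → Fin N → Fin r) (i : Fin r) (u : Fin N)
    (h : ∀ j : Fin r, n + 1 ≤ dX N r c j u → j = i) :
    N ≤ dX N r c i u + (r - 1) * n := by
  classical
  have hs := sum_dX c u
  have hsplit : ∑ j : Fin r, dX N r c j u
      = dX N r c i u + ∑ j ∈ Finset.univ.erase i, dX N r c j u :=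
    (Finset.add_sum_erase _ _ (Finset.mem_univ i)).symm
  have hle : ∑ j ∈ Finset.univ.erase i, dX N r c j u ≤ (r - 1) * n := by
    have hb : ∀ j ∈ Finset.univ.erase i, dX N r c j u ≤ n := by
      intro j hj
      by_contra hcon
      exact (Finset.mem_erase.mp hj).1 (h j (by omega))
    calc ∑ j ∈ Finset.univ.erase i, dX N r c j u
        ≤ (Finset.univ.erase i).card * n := by
          simpa using Finset.sum_le_card_nsmul _ _ n hb
      _ = (r - 1) * n := by
          rw [Finset.card_erase_of_mem (Finset.mem_univ i), Finset.card_univ, Fintype.card_fin]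
  omega

lemma xcount_mul_le {r n N : ℕ} (c : Fin N → Fin N → Fin r)
    (hno : ¬ BipHasMonoDoubleStar N r n n c) (i : Fin r) :
    xcount n N r c i * (N - (r - 1) * n) ≤ n * N := by
  classical
  set Xi := Finset.univ.filter (fun x : Fin N =>
    n + 1 ≤ dX N r c i x ∧ ∀ j : Fin r, n + 1 ≤ dX N r c j x → j = i) with hXi
  have key : ∑ u ∈ Xi, dX N r c i u
      = ∑ y : Fin N, (Xi.filter (fun u => c u y = i)).card := by
    simp only [dX, Finset.card_filter]
    rw [Finset.sum_comm]
  have upper : ∀ y : Fin N, (Xi.filter (fun u => c u y = i)).card ≤ n := by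
    intro y
    by_contra hcon
    push_neg at hcon
    have hpos : 0 < (Xi.filter (fun u => c u y = i)).card := by omega
    obtain ⟨u0, hu0⟩ := Finset.card_pos.mp hpos
    have hu0' := Finset.mem_filter.mp hu0
    have hu0X := (Finset.mem_filter.mp hu0'.1).2
    have hdY : n + 1 ≤ dY N r c i y := by
      have hsub : Xi.filter (fun u => c u y = i) ⊆
          Finset.univ.filter (fun u => c u y = i) :=
        Finset.filter_subset_filter _ (Finset.subset_univ Xi)
      have := Finset.card_le_card hsub
      have h2 : (Finset.univ.filter (fun u => c u y = i)).card = dY N r c i y := rfl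
      omega
    exact hno (monoStar_of c hu0'.2 hu0X.1 hdY)
  have lower : Xi.card * (N - (r - 1) * n) ≤ ∑ u ∈ Xi, dX N r c i u := by
    have hb : ∀ u ∈ Xi, N - (r - 1) * n ≤ dX N r c i u := by
      intro u hu
      have h2 := (Finset.mem_filter.mp hu).2
      have h3 := dX_ge c i u h2.2
      omega
    simpa using Finset.card_nsmul_le_sum Xi _ _ hb
  have upper' : ∑ y : Fin N, (Xi.filter (fun u => c u y = i)).card ≤ N * n := by
    calc ∑ y : Fin N, (Xi.filter (fun u => c u y = i)).card
        ≤ ∑ _y : Fin N, n := Finset.sum_le_sum (fun y _ => upper y)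
      _ = N * n := by simp [Finset.sum_const, Finset.card_univ]
  have hxc : xcount n N r c i = Xi.card := rfl
  rw [key] at lower
  rw [hxc]
  exact le_trans lower (le_trans upper' (le_of_eq (Nat.mul_comm N n)))

lemma flip_no {N r n : ℕ} (c : Fin N → Fin N → Fin r)
    (hno : ¬ BipHasMonoDoubleStar N r n n c) :
    ¬ BipHasMonoDoubleStar N r n n (fun a b => c b a) := by
  rintro ⟨u, v, a, b, col, hai, hbi, hav, hbu, huv, hua, hbv⟩
  exact hno ⟨v, u, b, a, col, hbi, hai, hbu, hav, huv, hbv, hua⟩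

lemma ycount_mul_le {r n N : ℕ} (c : Fin N → Fin N → Fin r)
    (hno : ¬ BipHasMonoDoubleStar N r n n c) (i : Fin r) :
    ycount n N r c i * (N - (r - 1) * n) ≤ n * N :=
  xcount_mul_le (fun a b => c b a) (flip_no c hno) i

lemma estar_add_sum_le {n N r : ℕ} (c : Fin N → Fin N → Fin r)
    (hno : ¬ BipHasMonoDoubleStar N r n n c) :
    estar n N r c + ∑ i : Fin r, xcount n N r c i * ycount n N r c i ≤ N * N := by
  classical
  set D : Fin r → Finset (Fin N × Fin N) := fun i =>
    (Finset.univ.filter (fun x : Fin N =>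
      n + 1 ≤ dX N r c i x ∧ ∀ j : Fin r, n + 1 ≤ dX N r c j x → j = i)) ×ˢ
    (Finset.univ.filter (fun y : Fin N =>
      n + 1 ≤ dY N r c i y ∧ ∀ j : Fin r, n + 1 ≤ dY N r c j y → j = i)) with hD
  have hdisj : ∀ i ∈ (Finset.univ : Finset (Fin r)), ∀ j ∈ (Finset.univ : Finset (Fin r)),
      i ≠ j → Disjoint (D i) (D j) := by
    intro i _ j _ hij
    rw [Finset.disjoint_left]
    intro p hpi hpj
    have h1 := (Finset.mem_filter.mp (Finset.mem_product.mp hpi).1).2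
    have h2 := (Finset.mem_filter.mp (Finset.mem_product.mp hpj).1).2
    exact hij (h2.2 i h1.1)
  have hsub : (Finset.univ : Finset (Fin r)).biUnion D ⊆
      Finset.univ.filter (fun p : Fin N × Fin N =>
        ¬ (n + 1 ≤ dX N r c (c p.1 p.2) p.1 ∨ n + 1 ≤ dY N r c (c p.1 p.2) p.2)) := by
    intro p hp
    obtain ⟨i, _, hpi⟩ := Finset.mem_biUnion.mp hp
    have h1 := (Finset.mem_filter.mp (Finset.mem_product.mp hpi).1).2
    have h2 := (Finset.mem_filter.mp (Finset.mem_product.mp hpi).2).2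
    refine Finset.mem_filter.mpr ⟨Finset.mem_univ _, ?_⟩
    rintro (h | h)
    · have hci : c p.1 p.2 = i := h1.2 _ h
      exact hno (monoStar_of c hci h1.1 h2.1)
    · have hci : c p.1 p.2 = i := h2.2 _ h
      exact hno (monoStar_of c hci h1.1 h2.1)
  have hcard : ∑ i : Fin r, xcount n N r c i * ycount n N r c i
      = ((Finset.univ : Finset (Fin r)).biUnion D).card := by
    rw [Finset.card_biUnion hdisj]
    refine Finset.sum_congr rfl (fun i _ => ?_)
    rw [hD]
    simp [Finset.card_product, xcount, ycount]
  have hsplit := Finset.card_filter_add_card_filter_not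
    (s := (Finset.univ : Finset (Fin N × Fin N)))
    (p := fun p : Fin N × Fin N =>
      n + 1 ≤ dX N r c (c p.1 p.2) p.1 ∨ n + 1 ≤ dY N r c (c p.1 p.2) p.2)
  have huniv : (Finset.univ : Finset (Fin N × Fin N)).card = N * N := by
    simp [Finset.card_univ]
  have hle := Finset.card_le_card hsub
  have hestar : estar n N r c = (Finset.univ.filter (fun p : Fin N × Fin N =>
      n + 1 ≤ dX N r c (c p.1 p.2) p.1 ∨ n + 1 ≤ dY N r c (c p.1 p.2) p.2)).card := rfl
  omega

lemma caseT {A Cc P x y : ℝ} (hx0 : 0 ≤ x) (hy0 : 0 ≤ y) (hC : 0 < Cc) (hP0 : 0 ≤ P)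
    (hq : x * y ≤ P ^ 2) (hxA : x ≤ A) (hyA : y ≤ A) (hmax : P / Cc ≤ max x y) :
    x + y ≤ A + Cc * (x * y) / P := by
  have hmin : min x y ≤ Cc * (x * y) / P := by
    rcases eq_or_lt_of_le (le_min hx0 hy0 : (0:ℝ) ≤ min x y) with h0 | hpos
    · rw [← h0]; positivity
    · have hPpos : 0 < P := by
        by_contra hcon
        push_neg at hcon
        have hPz : P = 0 := le_antisymm hcon hP0
        have hxy0 : x * y ≤ 0 := by rw [hPz] at hq; simpa using hq
        have h2 : min x y ≤ x := min_le_left _ _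
        have h3 : min x y ≤ y := min_le_right _ _
        nlinarith
      have hPC : P ≤ Cc * max x y := by
        rw [div_le_iff₀ hC] at hmax
        linarith [mul_comm (max x y) Cc]
      rw [le_div_iff₀ hPpos]
      have h2 : min x y * (Cc * max x y) = Cc * (min x y * max x y) := by ring
      rw [min_mul_max] at h2
      nlinarith [hpos.le]
  rcases le_total x y with hxy | hxy
  · rw [min_eq_left hxy] at hmin
    linarith
  · rw [min_eq_right hxy] at hmin
    linarith

lemma caseNT {Cc P x y : ℝ} (hx0 : 0 ≤ x) (hy0 : 0 ≤ y) (hC : 0 < Cc)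
    (hmax : max x y < P / Cc) :
    x + y ≤ P / Cc + Cc * (x * y) / P := by
  have hxB : x ≤ P / Cc := le_of_lt (lt_of_le_of_lt (le_max_left x y) hmax)
  have hyB : y ≤ P / Cc := le_of_lt (lt_of_le_of_lt (le_max_right x y) hmax)
  have hBpos : 0 < P / Cc := lt_of_le_of_lt (le_trans hx0 (le_max_left x y)) hmax
  have hPpos : 0 < P := by
    rcases div_pos_iff.mp hBpos with ⟨h, _⟩ | ⟨_, h⟩
    · exact h
    · linarith
  have key : 0 ≤ (P / Cc - x) * (P / Cc - y) := mul_nonneg (by linarith) (by linarith)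
  have hPCC : P / Cc * Cc = P := div_mul_cancel₀ P (ne_of_gt hC)
  have h2 : x + y - P / Cc ≤ Cc * (x * y) / P := by
    rw [le_div_iff₀ hPpos]
    nlinarith [key]
  linarith


end Stmt16Aux

set_option maxHeartbeats 1000000 in
/-- Claim `bigC`: `z_1 = ∑_i (x_i + y_i) ≤ tnN/(N-(r-1)n) + (r-t)σN/C + CσN`. -/
theorem stmt16 (r n N : ℕ) (hr : 2 ≤ r) (hn : 1 ≤ n) (hN : r * n + 1 ≤ N)
    (c : Fin N → Fin N → Fin r) (hno : ¬ BipHasMonoDoubleStar N r n n c)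
    (C : ℝ) (hC : 0 < C) :
    ∑ i : Fin r, ((xcount n N r c i : ℝ) + (ycount n N r c i : ℝ)) ≤
      (tcount n N r c C : ℝ) * n * N / ((N : ℝ) - ((r : ℝ) - 1) * n)
      + ((r : ℝ) - (tcount n N r c C : ℝ)) * (sigmaBip n N r c) * N / C
      + C * (sigmaBip n N r c) * N := by
  classical
  have hN0 : 0 < N := by omega
  have hNR : (0:ℝ) < N := by exact_mod_cast hN0
  have hEle : estar n N r c ≤ N * N := by
    have h := Finset.card_filter_le (Finset.univ : Finset (Fin N × Fin N))
      (fun p : Fin N × Fin N =>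
        n + 1 ≤ dX N r c (c p.1 p.2) p.1 ∨ n + 1 ≤ dY N r c (c p.1 p.2) p.2)
    have h2 : (Finset.univ : Finset (Fin N × Fin N)).card = N * N := by
      simp [Finset.card_univ]
    have h3 : estar n N r c = (Finset.univ.filter (fun p : Fin N × Fin N =>
      n + 1 ≤ dX N r c (c p.1 p.2) p.1 ∨ n + 1 ≤ dY N r c (c p.1 p.2) p.2)).card := rfl
    omega
  have hE : (0:ℝ) ≤ (N:ℝ)^2 - estar n N r c := by
    have h : (estar n N r c : ℝ) ≤ (N:ℝ) * N := by exact_mod_cast hEle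
    nlinarith
  -- P = σN
  have hPeq : sigmaBip n N r c * N = Real.sqrt ((N:ℝ)^2 - estar n N r c) := by
    unfold sigmaBip
    field_simp
  set P : ℝ := sigmaBip n N r c * N with hPdef
  have hP0 : 0 ≤ P := by rw [hPeq]; exact Real.sqrt_nonneg _
  have hPsq : P ^ 2 = (N:ℝ)^2 - estar n N r c := by rw [hPeq, Real.sq_sqrt hE]
  have hsumq : ∑ i : Fin r, (xcount n N r c i : ℝ) * (ycount n N r c i : ℝ) ≤ P ^ 2 := by
    rw [hPsq]
    have h3 : ((estar n N r c : ℕ):ℝ)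
        + ((∑ i : Fin r, xcount n N r c i * ycount n N r c i : ℕ):ℝ)
        ≤ ((N * N : ℕ):ℝ) := by exact_mod_cast estar_add_sum_le c hno
    push_cast at h3 ⊢
    nlinarith [h3]
  -- denominator
  have hNcast : (r:ℝ) * n + 1 ≤ (N:ℝ) := by exact_mod_cast hN
  have hn1 : (1:ℝ) ≤ n := by exact_mod_cast hn
  have hr1 : (2:ℝ) ≤ r := by exact_mod_cast hr
  set Dd : ℝ := (N:ℝ) - ((r:ℝ) - 1) * n with hDd
  have hDd0 : (0:ℝ) < Dd := by rw [hDd]; nlinarith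
  set A : ℝ := (n:ℝ) * N / Dd with hA
  have hsubcast : ((N - (r-1)*n : ℕ) : ℝ) = Dd := by
    have h1 : (r-1)*n ≤ N := by
      have : (r-1)*n ≤ r*n := Nat.mul_le_mul_right n (Nat.sub_le r 1)
      omega
    have h2 : (1:ℕ) ≤ r := by omega
    rw [hDd]
    push_cast [h1, h2]
    ring
  have hxA : ∀ i, (xcount n N r c i : ℝ) ≤ A := by
    intro i
    have h2 : (xcount n N r c i : ℝ) * Dd ≤ (n:ℝ) * N := by
      rw [← hsubcast]
      exact_mod_cast xcount_mul_le c hno i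
    rw [hA, le_div_iff₀ hDd0]
    exact h2
  have hyA : ∀ i, (ycount n N r c i : ℝ) ≤ A := by
    intro i
    have h2 : (ycount n N r c i : ℝ) * Dd ≤ (n:ℝ) * N := by
      rw [← hsubcast]
      exact_mod_cast ycount_mul_le c hno i
    rw [hA, le_div_iff₀ hDd0]
    exact h2
  -- the T predicate
  set pr : Fin r → Prop := fun i =>
    sigmaBip n N r c * N / C ≤ ((max (xcount n N r c i) (ycount n N r c i) : ℕ) : ℝ) with hpr
  have htc : tcount n N r c C = (Finset.univ.filter pr).card := by
    rw [tcount]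
  set t := (Finset.univ.filter pr).card with ht
  have htr : t ≤ r := by
    have h := Finset.card_filter_le (Finset.univ : Finset (Fin r)) pr
    simpa using h
  -- per-color bound
  have per : ∀ i : Fin r, (xcount n N r c i : ℝ) + (ycount n N r c i : ℝ)
      ≤ (if pr i then A else P / C)
        + C * ((xcount n N r c i : ℝ) * (ycount n N r c i : ℝ)) / P := by
    intro i
    have hqiP : (xcount n N r c i : ℝ) * (ycount n N r c i : ℝ) ≤ P ^ 2 := by
      refine le_trans (Finset.single_le_sum (f := fun j =>
        (xcount n N r c j : ℝ) * (ycount n N r c j : ℝ)) (fun j _ => by positivity)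
        (Finset.mem_univ i)) hsumq
    have hcastmax : ((max (xcount n N r c i) (ycount n N r c i) : ℕ) : ℝ)
        = max (xcount n N r c i : ℝ) (ycount n N r c i : ℝ) := Nat.cast_max _ _
    by_cases hiT : pr i
    · rw [if_pos hiT]
      have h' : P / C ≤ ((max (xcount n N r c i) (ycount n N r c i) : ℕ) : ℝ) := hiT
      rw [hcastmax] at h'
      have hmax := h'
      exact caseT (by positivity) (by positivity) hC hP0 hqiP (hxA i) (hyA i) hmax
    · rw [if_neg hiT]
      have h' : ¬ (P / C ≤ ((max (xcount n N r c i) (ycount n N r c i) : ℕ) : ℝ)) := hiT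
      have hmax := lt_of_not_ge h'
      rw [hcastmax] at hmax
      exact caseNT (by positivity) (by positivity) hC hmax
  -- sum everything
  have hsum1 : ∑ i : Fin r, ((xcount n N r c i : ℝ) + (ycount n N r c i : ℝ))
      ≤ ∑ i : Fin r, ((if pr i then A else P / C)
          + C * ((xcount n N r c i : ℝ) * (ycount n N r c i : ℝ)) / P) :=
    Finset.sum_le_sum (fun i _ => per i)
  have hsum2 : ∑ i : Fin r, ((if pr i then A else P / C)
        + C * ((xcount n N r c i : ℝ) * (ycount n N r c i : ℝ)) / P)
      = (t : ℝ) * A + ((r:ℝ) - t) * (P / C)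
        + C * (∑ i : Fin r, (xcount n N r c i : ℝ) * (ycount n N r c i : ℝ)) / P := by
    rw [Finset.sum_add_distrib]
    congr 1
    · rw [Finset.sum_ite, Finset.sum_const, Finset.sum_const]
      have hcomp : (Finset.univ.filter (fun i => ¬ pr i)).card = r - t := by
        have h := Finset.card_filter_add_card_filter_not
          (s := (Finset.univ : Finset (Fin r))) (p := pr)
        simp only [Finset.card_univ, Fintype.card_fin] at h
        omega
      rw [hcomp]
      have hc2 : ((r - t : ℕ) : ℝ) = (r:ℝ) - t := by
        push_cast [htr]
        ring
      simp [nsmul_eq_mul, hc2]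
      exact Or.inl (by rw [ht])
    · rw [← Finset.sum_div, ← Finset.mul_sum]
  have hsum3 : C * (∑ i : Fin r, (xcount n N r c i : ℝ) * (ycount n N r c i : ℝ)) / P
      ≤ C * P := by
    rcases eq_or_lt_of_le hP0 with h0 | hPpos
    · have h2 : (0:ℝ) ≤ ∑ i : Fin r, (xcount n N r c i : ℝ) * (ycount n N r c i : ℝ) :=
        Finset.sum_nonneg (fun i _ => by positivity)
      have hs0 : ∑ i : Fin r, (xcount n N r c i : ℝ) * (ycount n N r c i : ℝ) = 0 := by
        have h1 : ∑ i : Fin r, (xcount n N r c i : ℝ) * (ycount n N r c i : ℝ) ≤ 0 := by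
          rw [← h0] at hsumq
          simpa using hsumq
        linarith
      rw [hs0, ← h0]
      simp
    · rw [div_le_iff₀ hPpos]
      nlinarith [hsumq, hC.le]
  -- final arithmetic
  rw [htc]
  calc ∑ i : Fin r, ((xcount n N r c i : ℝ) + (ycount n N r c i : ℝ))
      ≤ (t : ℝ) * A + ((r:ℝ) - t) * (P / C)
        + C * (∑ i : Fin r, (xcount n N r c i : ℝ) * (ycount n N r c i : ℝ)) / P := by
        rw [← hsum2]
        exact hsum1
    _ ≤ (t : ℝ) * A + ((r:ℝ) - t) * (P / C) + C * P := by linarith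
    _ = _ := by rw [hA, hPdef, hDd]; ring
end
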